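/- Let P be a scale group acting on T_{q+1}. Then P^(e) acts transitively on the ends of T_{q+1} other than ω: for all ξ, ξ′ : ℤ → {0,…,q−1} with ξ_i = 0 = ξ′_i for all sufficiently small i, there exists an elliptic element g ∈ P with g(ξ|_m) = ξ′|_m for every m ∈ ℤ. -/

import Mathlib

namespace Scale

/-- A vertex of the `(q+1)`-regular tree `T_{q+1}`: a level `n ∈ ℤ` together with a
labelling `ℤ → Fin q` which vanishes above the level and for all sufficiently small indices. -/
@[ext] structure Vertex (q : ℕ) where
  level : ℤ
  lab : ℤ → Fin q
  zero_gt : ∀ i : ℤ, level < i → (lab i : ℕ) = 0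
  bdd : ∃ N : ℤ, ∀ i : ℤ, i < N → (lab i : ℕ) = 0

namespace Vertex

variable {q : ℕ} [NeZero q]

/-- The parent `v⁺` of a vertex. -/
def parent (v : Vertex q) : Vertex q where
  level := v.level - 1
  lab := fun i => if v.level - 1 < i then 0 else v.lab i
  zero_gt := by intro i hi; simp [hi]
  bdd := by
    obtain ⟨N, hN⟩ := v.bdd
    refine ⟨N, fun i hi => ?_⟩
    by_cases h : v.level - 1 < i
    · simp [h]
    · simp [h, hN i hi]

/-- The child `vj` of a vertex `v`. -/
def child (v : Vertex q) (j : Fin q) : Vertex q where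
  level := v.level + 1
  lab := fun i => if i = v.level + 1 then j else v.lab i
  zero_gt := by
    intro i hi
    have h1 : i ≠ v.level + 1 := by omega
    simp [h1, v.zero_gt i (by omega)]
  bdd := by
    obtain ⟨N, hN⟩ := v.bdd
    refine ⟨min N (v.level + 1), fun i hi => ?_⟩
    have h1 : i < N := lt_of_lt_of_le hi (min_le_left _ _)
    have h2 : i < v.level + 1 := lt_of_lt_of_le hi (min_le_right _ _)
    have h3 : i ≠ v.level + 1 := by omega
    simp [h3, hN i h1]

/-- The restriction `w|_m` of a vertex to level `m`. -/
def trunc (v : Vertex q) (m : ℤ) : Vertex q where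
  level := m
  lab := fun i => if m < i then 0 else v.lab i
  zero_gt := by intro i hi; simp [hi]
  bdd := by
    obtain ⟨N, hN⟩ := v.bdd
    refine ⟨N, fun i hi => ?_⟩
    by_cases h : m < i
    · simp [h]
    · simp [h, hN i hi]

/-- `w` is a descendant of `u` (in the rooted subtree `T_u`). -/
def Descendant (u w : Vertex q) : Prop := u.level ≤ w.level ∧ trunc w u.level = u

end Vertex

/-- The all-zero vertex `ṽ_n` at level `n`. -/
def zeroVtx (q : ℕ) [NeZero q] (n : ℤ) : Vertex q where
  level := n
  lab := fun _ => 0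
  zero_gt := by intro i _; simp
  bdd := ⟨0, by intro i _; simp⟩

/-- The map shifting all labels by `k` (a translation towards the end `ω` when `k > 0`). -/
def shiftMap {q : ℕ} (k : ℤ) (v : Vertex q) : Vertex q where
  level := v.level + k
  lab := fun i => v.lab (i - k)
  zero_gt := fun i hi => v.zero_gt (i - k) (by omega)
  bdd := by
    obtain ⟨N, hN⟩ := v.bdd
    exact ⟨N + k, fun i hi => hN (i - k) (by omega)⟩

/-- The translation `x̃₀ᵏ` of `T_{q+1}` as a permutation of the vertices. -/
def shiftPerm (q : ℕ) (k : ℤ) : Equiv.Perm (Vertex q) where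
  toFun := shiftMap k
  invFun := shiftMap (-k)
  left_inv := by
    intro v
    refine Vertex.ext ?_ ?_
    · show v.level + k + -k = v.level
      omega
    · funext i
      show v.lab (i - -k - k) = v.lab i
      congr 1
      omega
  right_inv := by
    intro v
    refine Vertex.ext ?_ ?_
    · show v.level + -k + k = v.level
      omega
    · funext i
      show v.lab (i - k - -k) = v.lab i
      congr 1
      omega

/-- The group `Isom(T_{q+1})_ω` of tree automorphisms fixing the distinguished end `ω`,
realised as the subgroup of permutations of the vertex set commuting with `parent`. -/
def IsomOmega (q : ℕ) [NeZero q] : Subgroup (Equiv.Perm (Vertex q)) where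
  carrier := {x | ∀ v : Vertex q, x (Vertex.parent v) = Vertex.parent (x v)}
  one_mem' := fun _ => rfl
  mul_mem' := by
    intro a b ha hb v
    show (a * b) (Vertex.parent v) = Vertex.parent ((a * b) v)
    rw [Equiv.Perm.mul_apply, Equiv.Perm.mul_apply, hb, ha]
  inv_mem' := by
    intro a ha v
    show a⁻¹ (Vertex.parent v) = Vertex.parent (a⁻¹ v)
    have h := ha (a⁻¹ v)
    rw [← Equiv.Perm.mul_apply, mul_inv_cancel, Equiv.Perm.one_apply] at h
    rw [← h, ← Equiv.Perm.mul_apply, inv_mul_cancel, Equiv.Perm.one_apply]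

/-- The level shift `n(x)` of an automorphism (evaluated at the zero vertex; for members
of `IsomOmega q` the shift is the same at every vertex). -/
def lshift {q : ℕ} [NeZero q] (x : Equiv.Perm (Vertex q)) : ℤ := (x (zeroVtx q 0)).level

/-- An automorphism is elliptic if it fixes a vertex. -/
def Elliptic {q : ℕ} (x : Equiv.Perm (Vertex q)) : Prop := ∃ v : Vertex q, x v = v

/-- Topology of pointwise convergence on `X → X` for `X` discrete. -/
def funTop (X : Type*) : TopologicalSpace (X → X) :=
  @Pi.topologicalSpace X (fun _ => X) (fun _ => ⊥)

/-- The permutation topology on `Equiv.Perm X`: pointwise stabilisers of finite sets of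
points form a neighbourhood basis of the identity. -/
def permTop (X : Type*) : TopologicalSpace (Equiv.Perm X) :=
  @TopologicalSpace.induced (Equiv.Perm X) ((X → X) × (X → X))
    (fun g => ((g : X → X), ((g⁻¹ : Equiv.Perm X) : X → X)))
    (@instTopologicalSpaceProd _ _ (funTop X) (funTop X))

instance (q : ℕ) : TopologicalSpace (Equiv.Perm (Vertex q)) := permTop _

instance (q : ℕ) : TopologicalSpace (Equiv.Perm (List (Fin q))) := permTop _

/-- A scale group: a closed subgroup of `Isom(T_{q+1})_ω` acting transitively on vertices. -/
def IsScaleGroup {q : ℕ} [NeZero q] (P : Subgroup (Equiv.Perm (Vertex q))) : Prop :=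
  P ≤ IsomOmega q ∧ IsClosed (P : Set (Equiv.Perm (Vertex q))) ∧
    ∀ v w : Vertex q, ∃ x ∈ P, x v = w

/-- The stabiliser of the vertex `v` in `P`, as a subgroup of the ambient permutation group. -/
def stabIn {q : ℕ} (P : Subgroup (Equiv.Perm (Vertex q))) (v : Vertex q) :
    Subgroup (Equiv.Perm (Vertex q)) where
  carrier := {g | g ∈ P ∧ g v = v}
  one_mem' := ⟨P.one_mem, rfl⟩
  mul_mem' := by
    intro a b ha hb
    exact ⟨P.mul_mem ha.1 hb.1, by rw [Equiv.Perm.mul_apply, hb.2, ha.2]⟩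
  inv_mem' := by
    intro a ha
    refine ⟨P.inv_mem ha.1, ?_⟩
    rw [Equiv.Perm.inv_eq_iff_eq]
    exact ha.2.symm

/-- The conjugate subgroup `xVx⁻¹`. -/
def conjSub {G : Type*} [Group G] (x : G) (V : Subgroup G) : Subgroup G :=
  V.map (MulAut.conj x).toMonoidHom

/-- The vertex `ξ|_m` on the ray towards the end represented by `ξ`. -/
def ray (q : ℕ) [NeZero q] (ξ : ℤ → Fin q) (N : ℤ) (hξ : ∀ i : ℤ, i < N → (ξ i : ℕ) = 0)
    (m : ℤ) : Vertex q where
  level := m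
  lab := fun i => if m < i then 0 else ξ i
  zero_gt := by intro i hi; simp [hi]
  bdd := by
    refine ⟨N, fun i hi => ?_⟩
    by_cases h : m < i
    · simp [h]
    · simp [h, hξ i hi]

/-- The contraction group of `x` in `P`. -/
def conSet {q : ℕ} (P : Subgroup (Equiv.Perm (Vertex q))) (x : Equiv.Perm (Vertex q)) :
    Set (Equiv.Perm (Vertex q)) :=
  {g | g ∈ P ∧ ∀ v : Vertex q, ∃ N : ℕ, ∀ n : ℕ, N ≤ n → (x ^ n * g * (x ^ n)⁻¹) v = v}


/-- `c` is a `P`-labelling of `T_{q+1}` with distinguished bi-infinite path `vp`: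
each `c v` is a bijection from the directed edges out of `v` (encoded as the
neighbours of `v`) to `{0, …, q}`; the edge towards the parent is labelled `q`;
along the path `vp` the downward edges are labelled `0`; and `P` contains, for
all `u₁, u₂`, an element carrying `u₁` to `u₂` and preserving the labels on the
rooted subtree of descendants of `u₁`. -/
def IsPLabelling {q : ℕ} [NeZero q] (P : Subgroup (Equiv.Perm (Vertex q)))
    (c : Vertex q → Vertex q → Fin (q + 1)) (vp : ℤ → Vertex q) : Prop :=
  (∀ v : Vertex q, ∀ j : Fin (q + 1),
      ∃! w : Vertex q, (Vertex.parent w = v ∨ w = Vertex.parent v) ∧ c v w = j) ∧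
  (∀ v : Vertex q, (c v (Vertex.parent v) : ℕ) = q) ∧
  (∀ n : ℤ, Vertex.parent (vp (n + 1)) = vp n) ∧
  (∀ n : ℤ, (c (vp n) (vp (n + 1)) : ℕ) = 0) ∧
  (∀ u₁ u₂ : Vertex q, ∃ x, x ∈ P ∧ x u₁ = u₂ ∧
    ∀ w w' : Vertex q, Vertex.Descendant u₁ w → Vertex.Descendant u₁ w' →
      (Vertex.parent w = w' ∨ Vertex.parent w' = w) → c (x w) (x w') = c w w')

open Classical in
/-- The standard labelling of `T_{q+1}`: the edge from `v` to its child `vj` is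
labelled `j` and the edge towards the parent is labelled `q`. -/
noncomputable def stdLabel (q : ℕ) [NeZero q] : Vertex q → Vertex q → Fin (q + 1) :=
  fun v w =>
    if Vertex.parent w = v then Fin.castLE (Nat.le_succ q) (w.lab (v.level + 1))
    else Fin.last q

/-- Convert an edge label in `{0,…,q}` known to be `< q` into a letter in `{0,…,q-1}`. -/
def toFinQ {q : ℕ} [NeZero q] (j : Fin (q + 1)) : Fin q :=
  if h : (j : ℕ) < q then ⟨j, h⟩ else ⟨0, Nat.pos_of_ne_zero (NeZero.ne q)⟩

/-- The string of labels read along the downward path of length `d` ending at `w`. -/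
def labelString {q : ℕ} [NeZero q] (c : Vertex q → Vertex q → Fin (q + 1)) :
    Vertex q → ℕ → List (Fin q)
  | _, 0 => []
  | w, (d + 1) => labelString c (Vertex.parent w) d ++ [toFinQ (c (Vertex.parent w) w)]

/-- The isomorphism `φ^c_v : T_v → T_{q,q}` given by a labelling `c`: a descendant `w`
of `v` is sent to the string of labels along the path from `v` down to `w`. -/
def phiStr {q : ℕ} [NeZero q] (c : Vertex q → Vertex q → Fin (q + 1)) (v w : Vertex q) :
    List (Fin q) :=
  labelString c w ((w.level - v.level).toNat)

/-- The set `P|_v = {φ^c_{x(v)} ∘ x ∘ (φ^c_v)⁻¹ : x ∈ P}` of sections of elements of `P`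
at the vertex `v`, with respect to the labelling `c`. -/
def sectSet {q : ℕ} [NeZero q] (P : Subgroup (Equiv.Perm (Vertex q)))
    (c : Vertex q → Vertex q → Fin (q + 1)) (v : Vertex q) :
    Set (Equiv.Perm (List (Fin q))) :=
  {g | ∃ x, x ∈ P ∧ ∀ w : Vertex q, Vertex.Descendant v w →
        g (phiStr c v w) = phiStr c (x v) (x w)}

/-- The standard isomorphism `φ_v : T_v → T_{q,q}`: a descendant `w` of `v` of level `m`
is sent to the string `(w_{n+1}, …, w_m)` where `n` is the level of `v`. -/
def stdStr {q : ℕ} (v w : Vertex q) : List (Fin q) :=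
  (List.range (w.level - v.level).toNat).map fun k => w.lab (v.level + 1 + k)

/-- The set `{φ_{x(v)} ∘ x ∘ φ_v⁻¹ : x ∈ P}` with respect to the standard isomorphisms. -/
def stdSect {q : ℕ} [NeZero q] (P : Subgroup (Equiv.Perm (Vertex q))) (v : Vertex q) :
    Set (Equiv.Perm (List (Fin q))) :=
  {g | ∃ x, x ∈ P ∧ ∀ w : Vertex q, Vertex.Descendant v w →
        g (stdStr v w) = stdStr (x v) (x w)}

/-- `Isom(T_{q,q})`: the group of permutations of the set of finite strings over
`{0,…,q-1}` preserving length and the prefix relation. -/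
def RIsom (q : ℕ) : Subgroup (Equiv.Perm (List (Fin q))) where
  carrier := {g | (∀ l : List (Fin q), (g l).length = l.length) ∧
    ∀ l₁ l₂ : List (Fin q), l₁ <+: l₂ → g l₁ <+: g l₂}
  one_mem' := ⟨fun _ => rfl, fun _ _ h => h⟩
  mul_mem' := by
    intro a b ha hb
    constructor
    · intro l
      rw [Equiv.Perm.mul_apply, ha.1, hb.1]
    · intro l₁ l₂ h
      rw [Equiv.Perm.mul_apply, Equiv.Perm.mul_apply]
      exact ha.2 _ _ (hb.2 _ _ h)
  inv_mem' := by
    intro a ha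
    have hlen : ∀ l : List (Fin q), (a⁻¹ l).length = l.length := by
      intro l
      have h := ha.1 (a⁻¹ l)
      rw [← Equiv.Perm.mul_apply, mul_inv_cancel, Equiv.Perm.one_apply] at h
      exact h.symm
    refine ⟨hlen, ?_⟩
    intro l₁ l₂ h
    have htake : List.take (a⁻¹ l₁).length (a⁻¹ l₂) <+: a⁻¹ l₂ := List.take_prefix _ _
    have h2 : a (List.take (a⁻¹ l₁).length (a⁻¹ l₂)) <+: a (a⁻¹ l₂) := ha.2 _ _ htake
    rw [← Equiv.Perm.mul_apply, mul_inv_cancel, Equiv.Perm.one_apply] at h2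
    have hle : l₁.length ≤ l₂.length := h.length_le
    have hlen3 : (a (List.take (a⁻¹ l₁).length (a⁻¹ l₂))).length = l₁.length := by
      rw [ha.1, List.length_take, hlen, hlen]
      omega
    have hpre : a (List.take (a⁻¹ l₁).length (a⁻¹ l₂)) <+: l₁ :=
      List.prefix_of_prefix_length_le h2 h (le_of_eq hlen3)
    have heq : a (List.take (a⁻¹ l₁).length (a⁻¹ l₂)) = l₁ := hpre.eq_of_length hlen3
    have heq2 : List.take (a⁻¹ l₁).length (a⁻¹ l₂) = a⁻¹ l₁ := by
      apply a.injective
      rw [heq, ← Equiv.Perm.mul_apply, mul_inv_cancel, Equiv.Perm.one_apply]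
    rw [← heq2]
    exact List.take_prefix _ _

/-- A subgroup of `Isom(T_{q,q})` is self-replicating if it is self-similar, transitive
on level 1, and all the section homomorphisms `g ↦ g|_w` are surjective. -/
def SelfReplicating {q : ℕ} (G : Subgroup (Equiv.Perm (List (Fin q)))) : Prop :=
  (∀ w : List (Fin q), ∀ g, g ∈ G → g w = w →
      ∃ g', g' ∈ G ∧ ∀ v : List (Fin q), g (w ++ v) = w ++ g' v) ∧
  (∀ j j' : Fin q, ∃ g ∈ G, g [j] = [j']) ∧
  (∀ w : List (Fin q), ∀ g', g' ∈ G →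
      ∃ g, g ∈ G ∧ g w = w ∧ ∀ v : List (Fin q), g (w ++ v) = w ++ g' v)

/-- The stabiliser of the string `w` in `G ≤ Isom(T_{q,q})`, as a subgroup of `G`. -/
def rstab {q : ℕ} (G : Subgroup (Equiv.Perm (List (Fin q)))) (w : List (Fin q)) :
    Subgroup G where
  carrier := {g | (g : Equiv.Perm (List (Fin q))) w = w}
  one_mem' := rfl
  mul_mem' := by
    intro a b ha hb
    show ((a * b : G) : Equiv.Perm (List (Fin q))) w = w
    rw [Subgroup.coe_mul, Equiv.Perm.mul_apply]
    rw [show (b : Equiv.Perm (List (Fin q))) w = w from hb,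
      show (a : Equiv.Perm (List (Fin q))) w = w from ha]
  inv_mem' := by
    intro a ha
    show ((a⁻¹ : G) : Equiv.Perm (List (Fin q))) w = w
    rw [Subgroup.coe_inv, Equiv.Perm.inv_eq_iff_eq]
    exact (show (a : Equiv.Perm (List (Fin q))) w = w from ha).symm


end Scale


section Aux

open Scale

variable {q : ℕ} [NeZero q]

lemma ray_parent (ξ : ℤ → Fin q) (N : ℤ) (hξ : ∀ i : ℤ, i < N → (ξ i : ℕ) = 0) (m : ℤ) :
    Vertex.parent (ray q ξ N hξ m) = ray q ξ N hξ (m - 1) := by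
  refine Vertex.ext rfl ?_
  funext i
  show (if m - 1 < i then 0 else if m < i then 0 else ξ i) = if m - 1 < i then 0 else ξ i
  split_ifs with h1 h2 <;> first | rfl | omega

lemma ray_parent_iter (ξ : ℤ → Fin q) (N : ℤ) (hξ : ∀ i : ℤ, i < N → (ξ i : ℕ) = 0)
    (k : ℕ) (m : ℤ) :
    Vertex.parent^[k] (ray q ξ N hξ m) = ray q ξ N hξ (m - k) := by
  induction k with
  | zero => simp
  | succ k ih =>
    rw [Function.iterate_succ_apply', ih, ray_parent]
    congr 1
    push_cast
    ring

lemma isom_parent_iter (x : Equiv.Perm (Vertex q))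
    (hx : ∀ v, x (Vertex.parent v) = Vertex.parent (x v)) (k : ℕ) (v : Vertex q) :
    x (Vertex.parent^[k] v) = Vertex.parent^[k] (x v) := by
  induction k with
  | zero => rfl
  | succ k ih => rw [Function.iterate_succ_apply', Function.iterate_succ_apply', hx, ih]

lemma parent_iter_level (k : ℕ) (v : Vertex q) :
    (Vertex.parent^[k] v).level = v.level - k := by
  induction k generalizing v with
  | zero => simp
  | succ k ih =>
    rw [Function.iterate_succ_apply']
    show (Vertex.parent^[k] v).level - 1 = v.level - (k + 1 : ℕ)
    rw [ih]
    push_cast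
    ring

lemma trunc_eq_parent_iter : ∀ (k : ℕ) (v : Vertex q) (m : ℤ), m ≤ v.level →
    v.level - m = k → v.trunc m = Vertex.parent^[k] v := by
  intro k
  induction k with
  | zero =>
    intro v m h1 h2
    have hm : m = v.level := by omega
    subst hm
    refine Vertex.ext rfl ?_
    funext i
    show (if v.level < i then 0 else v.lab i) = v.lab i
    split_ifs with h
    · exact (Fin.ext (by simpa using (v.zero_gt i h).symm))
    · rfl
  | succ k ih =>
    intro v m h1 h2
    have h3 : m ≤ (Vertex.parent v).level := by
      show m ≤ v.level - 1; omega
    have h4 : (Vertex.parent v).level - m = k := by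
      show v.level - 1 - m = k; push_cast at h2 ⊢; omega
    have h5 : v.trunc m = (Vertex.parent v).trunc m := by
      refine Vertex.ext rfl ?_
      funext i
      show (if m < i then 0 else v.lab i) =
        (if m < i then 0 else if v.level - 1 < i then 0 else v.lab i)
      split_ifs with ha hb <;> first | rfl | omega
    rw [h5, ih (Vertex.parent v) m h3 h4, Function.iterate_succ_apply]

lemma ray_level (ξ : ℤ → Fin q) (N : ℤ) (hξ : ∀ i : ℤ, i < N → (ξ i : ℕ) = 0) (m : ℤ) :
    (ray q ξ N hξ m).level = m := rfl

lemma ray_map_down (x : Equiv.Perm (Vertex q))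
    (hx : ∀ v, x (Vertex.parent v) = Vertex.parent (x v))
    (ξ ξ' : ℤ → Fin q) (N N' : ℤ)
    (hξ : ∀ i : ℤ, i < N → (ξ i : ℕ) = 0) (hξ' : ∀ i : ℤ, i < N' → (ξ' i : ℕ) = 0)
    (m0 : ℤ) (h0 : x (ray q ξ N hξ m0) = ray q ξ' N' hξ' m0)
    (m : ℤ) (hm : m ≤ m0) :
    x (ray q ξ N hξ m) = ray q ξ' N' hξ' m := by
  have hk : ∀ (ζ : ℤ → Fin q) (A : ℤ) (hζ : ∀ i : ℤ, i < A → (ζ i : ℕ) = 0),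
      Vertex.parent^[(m0 - m).toNat] (ray q ζ A hζ m0) = ray q ζ A hζ m := by
    intro ζ A hζ
    rw [ray_parent_iter]
    congr 1
    omega
  rw [← hk ξ N hξ, isom_parent_iter x hx, h0, hk ξ' N' hξ']

lemma core_lemma (x : Equiv.Perm (Vertex q))
    (hx : ∀ v, x (Vertex.parent v) = Vertex.parent (x v))
    (ζ ζ' : ℤ → Fin q) (A B : ℤ)
    (hζ : ∀ i : ℤ, i < A → (ζ i : ℕ) = 0) (hζ' : ∀ i : ℤ, i < B → (ζ' i : ℕ) = 0)
    (hr : ∀ m : ℤ, m ≤ 0 → x (ray q ζ A hζ m) = ray q ζ' B hζ' m)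
    (v : Vertex q) (m : ℤ) (hm0 : m ≤ 0) (hmA : m < A) (hmv : m ≤ v.level)
    (hvlab : ∀ i : ℤ, i ≤ m → (v.lab i : ℕ) = 0) :
    (x v).level = v.level ∧ (x v).trunc m = ray q ζ' B hζ' m := by
  set k := (v.level - m).toNat with hkdef
  have h1 : v.trunc m = Vertex.parent^[k] v := trunc_eq_parent_iter k v m hmv (by omega)
  have h2 : v.trunc m = ray q ζ A hζ m := by
    refine Vertex.ext rfl ?_
    funext i
    show (if m < i then 0 else v.lab i) = if m < i then 0 else ζ i
    split_ifs with h
    · rfl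
    · exact Fin.ext (by rw [hvlab i (by omega), hζ i (by omega)])
  have h3 : Vertex.parent^[k] (x v) = ray q ζ' B hζ' m := by
    rw [← isom_parent_iter x hx k v, ← h1, h2, hr m hm0]
  have hlev : (x v).level = v.level := by
    have h4 := congrArg Vertex.level h3
    rw [parent_iter_level, ray_level] at h4
    omega
  exact ⟨hlev, by rw [trunc_eq_parent_iter k (x v) m (by omega) (by omega), h3]⟩

lemma finite_fiber (L m : ℤ) (u : Vertex q) :
    {w : Vertex q | w.level = L ∧ w.trunc m = u}.Finite := by
  set n := (L - m).toNat with hn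
  have key : Set.InjOn (fun w : Vertex q => fun k : Fin n => w.lab (m + 1 + k))
      {w : Vertex q | w.level = L ∧ w.trunc m = u} := by
    rintro w ⟨hw1, hw2⟩ w' ⟨hw1', hw2'⟩ h
    refine Vertex.ext (by rw [hw1, hw1']) ?_
    funext i
    rcases le_or_gt i m with hi | hi
    · have e1 := congrFun (congrArg Vertex.lab hw2) i
      have e2 := congrFun (congrArg Vertex.lab hw2') i
      have e1' : w.lab i = u.lab i := by
        rw [← e1]; show w.lab i = if m < i then 0 else w.lab i
        rw [if_neg (by omega)]
      have e2' : w'.lab i = u.lab i := by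
        rw [← e2]; show w'.lab i = if m < i then 0 else w'.lab i
        rw [if_neg (by omega)]
      rw [e1', e2']
    · rcases le_or_gt i L with hiL | hiL
      · have hkn : (i - m - 1).toNat < n := by omega
        have hik : i = m + 1 + ((⟨(i - m - 1).toNat, hkn⟩ : Fin n) : ℤ) := by
          simp only [Int.toNat_of_nonneg (by omega : (0:ℤ) ≤ i - m - 1)]
          omega
        rw [hik]
        exact congrFun h ⟨(i - m - 1).toNat, hkn⟩
      · exact Fin.ext (by rw [w.zero_gt i (by omega), w'.zero_gt i (by omega)])
  exact Set.Finite.of_finite_image (Set.toFinite _) key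

lemma ray_congr (ξ ξ' : ℤ → Fin q) (N N' : ℤ)
    (hξ : ∀ i : ℤ, i < N → (ξ i : ℕ) = 0) (hξ' : ∀ i : ℤ, i < N' → (ξ' i : ℕ) = 0)
    (m : ℤ) (hmN : m < N) (hmN' : m < N') :
    ray q ξ N hξ m = ray q ξ' N' hξ' m := by
  refine Vertex.ext rfl ?_
  funext i
  show (if m < i then 0 else ξ i) = if m < i then 0 else ξ' i
  split_ifs with h
  · rfl
  · exact Fin.ext (by rw [hξ i (by omega), hξ' i (by omega)])

end Aux

open Scale in
/-- The elliptic part of a scale group acts transitively on the ends of the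
tree other than `ω`. -/
theorem statement_2 (q : ℕ) [NeZero q] (hq : 2 ≤ q)
    (P : Subgroup (Equiv.Perm (Vertex q))) (hP : IsScaleGroup P)
    (ξ ξ' : ℤ → Fin q) (N N' : ℤ)
    (hξ : ∀ i : ℤ, i < N → (ξ i : ℕ) = 0) (hξ' : ∀ i : ℤ, i < N' → (ξ' i : ℕ) = 0) :
    ∃ g ∈ P, Elliptic g ∧ ∀ m : ℤ, g (ray q ξ N hξ m) = ray q ξ' N' hξ' m := by
  classical
  obtain ⟨hPle, hPcl, hPtr⟩ := hP
  have hPmem : ∀ y ∈ P, ∀ v : Vertex q, y (Vertex.parent v) = Vertex.parent (y v) :=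
    fun y hy => hPle hy
  letI : TopologicalSpace (Vertex q) := ⊥
  haveI : DiscreteTopology (Vertex q) := ⟨rfl⟩
  set j : Equiv.Perm (Vertex q) → ((Vertex q → Vertex q) × (Vertex q → Vertex q)) :=
    fun g => ((g : Vertex q → Vertex q), ((g⁻¹ : Equiv.Perm (Vertex q)) : Vertex q → Vertex q))
    with hjdef
  have hj : Topology.IsInducing j := ⟨rfl⟩
  have hcont_eval : ∀ v : Vertex q,
      Continuous fun x : Equiv.Perm (Vertex q) => x v :=
    fun v => (continuous_apply v).comp (continuous_fst.comp hj.continuous)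
  -- the nested sequence of closed sets
  set A : ℕ → Set (Equiv.Perm (Vertex q)) := fun n =>
    {x | x ∈ P ∧ ∀ m : ℤ, m ≤ (n : ℤ) → x (ray q ξ N hξ m) = ray q ξ' N' hξ' m} with hAdef
  have hsub : ∀ n, A (n + 1) ⊆ A n := by
    intro n x hx
    exact ⟨hx.1, fun m hm => hx.2 m (by push_cast at hm ⊢; omega)⟩
  have hne : ∀ n, (A n).Nonempty := by
    intro n
    obtain ⟨x, hxP, hxr⟩ := hPtr (ray q ξ N hξ (n : ℤ)) (ray q ξ' N' hξ' (n : ℤ))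
    exact ⟨x, hxP, fun m hm =>
      ray_map_down x (hPmem x hxP) ξ ξ' N N' hξ hξ' (n : ℤ) hxr m hm⟩
  have hAcl : ∀ n, IsClosed (A n) := by
    intro n
    have heq : A n = (P : Set (Equiv.Perm (Vertex q))) ∩
        ⋂ (m : ℤ) (_ : m ≤ (n : ℤ)),
          {x : Equiv.Perm (Vertex q) | x (ray q ξ N hξ m) = ray q ξ' N' hξ' m} := by
      ext x
      simp only [hAdef, Set.mem_setOf_eq, Set.mem_inter_iff, Set.mem_iInter, SetLike.mem_coe]
    rw [heq]
    refine hPcl.inter (isClosed_iInter fun m => isClosed_iInter fun _ => ?_)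
    have : {x : Equiv.Perm (Vertex q) | x (ray q ξ N hξ m) = ray q ξ' N' hξ' m} =
        (fun x : Equiv.Perm (Vertex q) => x (ray q ξ N hξ m)) ⁻¹' {ray q ξ' N' hξ' m} := rfl
    rw [this]
    exact (isClosed_singleton).preimage (hcont_eval _)
  -- the compact box
  set Mv : Vertex q → ℤ := fun v =>
    min (min N N') (min (min v.level 0) (Classical.choose v.bdd)) - 1 with hMvdef
  have hMv : ∀ v : Vertex q, Mv v ≤ 0 ∧ Mv v < N ∧ Mv v < N' ∧ Mv v ≤ v.level ∧
      ∀ i : ℤ, i ≤ Mv v → (v.lab i : ℕ) = 0 := by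
    intro v
    have hb := Classical.choose_spec v.bdd
    refine ⟨by simp only [hMvdef]; omega, by simp only [hMvdef]; omega,
      by simp only [hMvdef]; omega, by simp only [hMvdef]; omega, fun i hi => ?_⟩
    refine hb i ?_
    simp only [hMvdef] at hi
    omega
  set T : Vertex q → Set (Vertex q) := fun v =>
    {w : Vertex q | w.level = v.level ∧ w.trunc (Mv v) = ray q ξ' N' hξ' (Mv v)} with hTdef
  set T' : Vertex q → Set (Vertex q) := fun v =>
    {w : Vertex q | w.level = v.level ∧ w.trunc (Mv v) = ray q ξ N hξ (Mv v)} with hT'def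
  have hTfin : ∀ v, (T v).Finite := fun v => finite_fiber _ _ _
  have hT'fin : ∀ v, (T' v).Finite := fun v => finite_fiber _ _ _
  set B : Set ((Vertex q → Vertex q) × (Vertex q → Vertex q)) :=
    (Set.univ.pi T) ×ˢ (Set.univ.pi T') with hBdef
  have hBcomp : IsCompact B :=
    (isCompact_univ_pi fun v => (hTfin v).isCompact).prod
      (isCompact_univ_pi fun v => (hT'fin v).isCompact)
  have hsubB : j '' (A 0) ⊆ B := by
    rintro p ⟨x, ⟨hxP, hxr⟩, rfl⟩
    have hx : ∀ v, x (Vertex.parent v) = Vertex.parent (x v) := hPmem x hxP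
    have hxinv : ∀ v, x⁻¹ (Vertex.parent v) = Vertex.parent (x⁻¹ v) :=
      hPmem x⁻¹ (P.inv_mem hxP)
    have hr0 : ∀ m : ℤ, m ≤ 0 → x (ray q ξ N hξ m) = ray q ξ' N' hξ' m :=
      fun m hm => hxr m (by exact_mod_cast hm)
    have hr0' : ∀ m : ℤ, m ≤ 0 → x⁻¹ (ray q ξ' N' hξ' m) = ray q ξ N hξ m := by
      intro m hm
      rw [← hr0 m hm, ← Equiv.Perm.mul_apply, inv_mul_cancel, Equiv.Perm.one_apply]
    constructor
    · intro v _
      obtain ⟨h0, h1, h2, h3, h4⟩ := hMv v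
      exact core_lemma x hx ξ ξ' N N' hξ hξ' hr0 v (Mv v) h0 h1 h3 h4
    · intro v _
      obtain ⟨h0, h1, h2, h3, h4⟩ := hMv v
      exact core_lemma x⁻¹ hxinv ξ' ξ N' N hξ' hξ hr0' v (Mv v) h0 h2 h3 h4
  -- the range of j is closed
  have hopen_eval : ∀ (v : Vertex q) (s : Set (Vertex q)),
      IsOpen {f : Vertex q → Vertex q | f v ∈ s} :=
    fun v s => (isOpen_discrete s).preimage (continuous_apply v)
  have hrange : IsClosed (Set.range j) := by
    have hr : Set.range j =
        (⋂ v : Vertex q, {p : (Vertex q → Vertex q) × (Vertex q → Vertex q) |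
          p.2 (p.1 v) = v}) ∩
        (⋂ v : Vertex q, {p : (Vertex q → Vertex q) × (Vertex q → Vertex q) |
          p.1 (p.2 v) = v}) := by
      ext p
      simp only [Set.mem_range, Set.mem_inter_iff, Set.mem_iInter, Set.mem_setOf_eq]
      constructor
      · rintro ⟨x, rfl⟩
        exact ⟨fun v => Equiv.symm_apply_apply x v, fun v => Equiv.apply_symm_apply x v⟩
      · rintro ⟨h1, h2⟩
        refine ⟨Equiv.mk p.1 p.2 h1 h2, ?_⟩
        simp only [hjdef]
        rfl
    rw [hr]
    have hcl1 : ∀ v : Vertex q, IsClosed {p : (Vertex q → Vertex q) × (Vertex q → Vertex q) |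
        p.2 (p.1 v) = v} := by
      intro v
      rw [← isOpen_compl_iff]
      have : {p : (Vertex q → Vertex q) × (Vertex q → Vertex q) | p.2 (p.1 v) = v}ᶜ =
          ⋃ u : Vertex q, {f : Vertex q → Vertex q | f v = u} ×ˢ
            {h : Vertex q → Vertex q | h u ≠ v} := by
        ext p
        simp only [Set.mem_compl_iff, Set.mem_setOf_eq, Set.mem_iUnion, Set.mem_prod]
        constructor
        · intro h
          exact ⟨p.1 v, rfl, h⟩
        · rintro ⟨u, h1, h2⟩
          rw [h1]
          exact h2
      rw [this]
      exact isOpen_iUnion fun u =>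
        (hopen_eval v {u}).prod (hopen_eval u {v}ᶜ)
    have hcl2 : ∀ v : Vertex q, IsClosed {p : (Vertex q → Vertex q) × (Vertex q → Vertex q) |
        p.1 (p.2 v) = v} := by
      intro v
      rw [← isOpen_compl_iff]
      have : {p : (Vertex q → Vertex q) × (Vertex q → Vertex q) | p.1 (p.2 v) = v}ᶜ =
          ⋃ u : Vertex q, {f : Vertex q → Vertex q | f u ≠ v} ×ˢ
            {h : Vertex q → Vertex q | h v = u} := by
        ext p
        simp only [Set.mem_compl_iff, Set.mem_setOf_eq, Set.mem_iUnion, Set.mem_prod]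
        constructor
        · intro h
          exact ⟨p.2 v, h, rfl⟩
        · rintro ⟨u, h1, h2⟩
          rw [h2]
          exact h1
      rw [this]
      exact isOpen_iUnion fun u =>
        (hopen_eval u {v}ᶜ).prod (hopen_eval v {u})
    exact (isClosed_iInter hcl1).inter (isClosed_iInter hcl2)
  -- A 0 is compact
  have hA0comp : IsCompact (A 0) := by
    obtain ⟨C, hCcl, hCpre⟩ := hj.isClosed_iff.mp (hAcl 0)
    have himg : j '' (A 0) = C ∩ Set.range j := by
      rw [← hCpre, Set.image_preimage_eq_inter_range]
    refine hj.isCompact_iff.mpr ?_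
    refine IsCompact.of_isClosed_subset hBcomp ?_ hsubB
    rw [himg]
    exact hCcl.inter hrange
  obtain ⟨g, hg⟩ := IsCompact.nonempty_iInter_of_sequence_nonempty_isCompact_isClosed
    A hsub hne hA0comp hAcl
  simp only [Set.mem_iInter] at hg
  have hgP : g ∈ P := (hg 0).1
  have hgray : ∀ m : ℤ, g (ray q ξ N hξ m) = ray q ξ' N' hξ' m := by
    intro m
    rcases le_or_gt m 0 with h | h
    · exact (hg 0).2 m (by exact_mod_cast h)
    · exact (hg m.toNat).2 m (by omega)
  refine ⟨g, hgP, ⟨ray q ξ N hξ (min N N' - 1), ?_⟩, hgray⟩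
  rw [hgray]
  exact (ray_congr ξ ξ' N N' hξ hξ' (min N N' - 1) (by omega) (by omega)).symm
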